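/- Fix λ > 0 and define ν(d) = ν_λ(d) = (d·x̃(d) - 1)/(1 + x̃(d)), where x̃(d) is the unique positive solution of d·x = 1 + λ/(1+x)^d, with d ranging over positive reals. Then ν is differentiable in d with ν'(d) = (ν(d)/(d·x̃(d)))·(x̃(d) - log(1 + x̃(d))) > 0; in particular ν is strictly increasing in d. -/

import Mathlib

noncomputable def shearLE (a b : ℝ) (hb : b ≠ 0) : (ℝ × ℝ) ≃ₗ[ℝ] (ℝ × ℝ) where
  toFun p := (p.1, a * p.1 + b * p.2)
  invFun p := (p.1, (p.2 - a * p.1) / b)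
  map_add' p q := by simp; ring
  map_smul' c p := by simp; ring
  left_inv p := by field_simp; simp [hb]
  right_inv p := by field_simp; simp

noncomputable def shear (a b : ℝ) (hb : b ≠ 0) : (ℝ × ℝ) ≃L[ℝ] (ℝ × ℝ) :=
  (shearLE a b hb).toContinuousLinearEquiv

@[simp] lemma shear_apply (a b : ℝ) (hb : b ≠ 0) (p : ℝ × ℝ) :
    shear a b hb p = (p.1, a * p.1 + b * p.2) := rfl

@[simp] lemma shear_symm_apply (a b : ℝ) (hb : b ≠ 0) (p : ℝ × ℝ) :
    (shear a b hb).symm p = (p.1, (p.2 - a * p.1) / b) := rfl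

lemma xt_hasDerivAt (lam : ℝ) (hlam : 0 < lam) (xt : ℝ → ℝ)
    (hxt : ∀ d > (0 : ℝ), 0 < xt d ∧ d * xt d = 1 + lam / (1 + xt d) ^ d)
    (d : ℝ) (hd : 0 < d) :
    HasDerivAt xt
      (-((xt d + Real.log (1 + xt d) * (d * xt d - 1)) /
        (d * xt d * (1 + d) / (1 + xt d)))) d := by
  obtain ⟨hx, heq⟩ := hxt d hd
  set x := xt d with hxdef
  have h1x : (0:ℝ) < 1 + x := by linarith
  have hrpow : (1 + x) ^ d = Real.exp (Real.log (1 + x) * d) := Real.rpow_def_of_pos h1x d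
  have hE : lam * Real.exp (-(Real.log (1 + x) * d)) = d * x - 1 := by
    rw [Real.exp_neg, ← hrpow, ← div_eq_mul_inv]; linarith
  have hE' : Real.exp (-(Real.log (1 + x) * d)) = (d * x - 1) / lam := by
    rw [eq_div_iff (ne_of_gt hlam), mul_comm]; exact hE
  have hEpos : (0:ℝ) < d * x - 1 := by rw [← hE]; positivity
  set F : ℝ × ℝ → ℝ := fun p => p.1 * p.2 - 1 - lam * Real.exp (-(Real.log (1 + p.2) * p.1))
    with hF
  set a : ℝ := x + Real.log (1 + x) * (d * x - 1) with ha
  set b : ℝ := d * x * (1 + d) / (1 + x) with hbdef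
  have hbpos : 0 < b := by rw [hbdef]; positivity
  have hb : b ≠ 0 := ne_of_gt hbpos
  set p₀ : ℝ × ℝ := (d, x) with hp₀
  -- zero of F at (t, xt t) for all positive t
  have hFxt : ∀ t, 0 < t → F (t, xt t) = 0 := by
    intro t ht
    obtain ⟨h1, h2⟩ := hxt t ht
    have h1t : (0:ℝ) < 1 + xt t := by linarith
    have hr : (1 + xt t) ^ t = Real.exp (Real.log (1 + xt t) * t) := Real.rpow_def_of_pos h1t t
    have : lam * Real.exp (-(Real.log (1 + xt t) * t)) = t * xt t - 1 := by
      rw [Real.exp_neg, ← hr, ← div_eq_mul_inv]; linarith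
    simp only [hF]; linarith
  -- strict derivative of Φ := (fst, F)
  have hlog : HasStrictFDerivAt (fun p : ℝ × ℝ => Real.log (1 + p.2))
      ((1 + x)⁻¹ • ((0 : (ℝ×ℝ) →L[ℝ] ℝ) + ContinuousLinearMap.snd ℝ ℝ ℝ)) p₀ := by
    have := (Real.hasStrictDerivAt_log (ne_of_gt h1x)).comp_hasStrictFDerivAt p₀
      ((hasStrictFDerivAt_const (1:ℝ) p₀).add (hasStrictFDerivAt_snd (𝕜 := ℝ) (p := p₀)))
    exact this
  have hinner := (hlog.mul hasStrictFDerivAt_fst).neg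
  have hexp := (Real.hasStrictDerivAt_exp _).comp_hasStrictFDerivAt p₀ hinner
  have hFd := ((hasStrictFDerivAt_fst.mul hasStrictFDerivAt_snd).sub_const (1:ℝ)).sub
      (hexp.const_mul lam)
  have hΦ' := HasStrictFDerivAt.prodMk hasStrictFDerivAt_fst hFd
  have hΦ : HasStrictFDerivAt (fun p : ℝ × ℝ => (p.1, F p))
      ((shear a b hb : (ℝ×ℝ) ≃L[ℝ] (ℝ×ℝ)) : (ℝ×ℝ) →L[ℝ] (ℝ×ℝ)) p₀ := by
    refine hΦ'.congr_fderiv ?_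
    symm
    refine ContinuousLinearMap.ext fun p => Prod.ext ?_ ?_
    · simp
    · simp only [ContinuousLinearMap.prod_apply, ContinuousLinearMap.coe_fst',
        ContinuousLinearMap.coe_snd', ContinuousLinearMap.add_apply,
        ContinuousLinearMap.smul_apply, ContinuousLinearMap.sub_apply,
        ContinuousLinearMap.neg_apply, ContinuousLinearMap.zero_apply,
        ContinuousLinearEquiv.coe_coe, shear_apply, hp₀, hE', smul_eq_mul, ha, hbdef,
        Pi.neg_apply, Pi.mul_apply]
      field_simp
      ring
  -- local inverse
  have hΦ0 : ((p₀.1 : ℝ), F p₀) = ((d:ℝ), (0:ℝ)) := by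
    have := hFxt d hd
    simp only [hp₀] at this ⊢
    simp [this]
    exact this
  set g := hΦ.localInverse _ _ _ with hg
  have hgder := hΦ.to_localInverse
  rw [hΦ0] at hgder
  have hcurve : HasDerivAt (fun t : ℝ => ((t, (0:ℝ)) : ℝ × ℝ)) ((1:ℝ), (0:ℝ)) d :=
    HasDerivAt.prodMk (hasDerivAt_id d) (hasDerivAt_const d (0:ℝ))
  have hgd : HasDerivAt (fun t : ℝ => g (t, 0))
      ((shear a b hb).symm ((1:ℝ), (0:ℝ))) d := by
    have := hgder.hasFDerivAt.comp_hasDerivAt d hcurve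
    exact this
  have hφd : HasDerivAt (fun t : ℝ => (g (t, 0)).2)
      (((shear a b hb).symm ((1:ℝ), (0:ℝ))).2) d := by
    have := (ContinuousLinearMap.snd ℝ ℝ ℝ).hasFDerivAt.comp_hasDerivAt d hgd
    exact this
  have hval : ((shear a b hb).symm ((1:ℝ), (0:ℝ))).2 = -(a / b) := by
    simp [neg_div]
  rw [hval] at hφd
  -- continuity and eventual identities
  have hgp : g (d, 0) = p₀ := by
    have := hΦ.localInverse_apply_image
    rw [hΦ0] at this; exact this
  have hgc : ContinuousAt g (d, 0) := by
    have := hΦ.localInverse_continuousAt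
    rw [hΦ0] at this; exact this
  have htends : Filter.Tendsto (fun t : ℝ => ((t, (0:ℝ)) : ℝ × ℝ)) (nhds d) (nhds (d, 0)) := by
    exact (continuous_id.prodMk continuous_const).continuousAt
  have hginv : ∀ᶠ p in nhds ((d : ℝ), (0:ℝ)), (fun p : ℝ × ℝ => (p.1, F p)) (g p) = p := by
    have := hΦ.eventually_right_inverse
    rw [hΦ0] at this; exact this
  have hev1 : ∀ᶠ t in nhds d, (fun p : ℝ × ℝ => (p.1, F p)) (g (t, 0)) = (t, 0) :=
    htends.eventually hginv
  have hcurvec : ContinuousAt (fun t : ℝ => ((t, (0:ℝ)) : ℝ × ℝ)) d :=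
    (continuous_id.prodMk continuous_const).continuousAt
  have hφc : ContinuousAt (fun t : ℝ => (g (t, 0)).2) d := by
    have : ContinuousAt (fun t : ℝ => g (t, 0)) d :=
      ContinuousAt.comp (f := fun t : ℝ => ((t, (0:ℝ)) : ℝ × ℝ)) hgc hcurvec
    exact this.snd
  have hφdval : (g ((d:ℝ), 0)).2 = x := by rw [hgp]
  have hev2 : ∀ᶠ t in nhds d, 0 < (g (t, 0)).2 := by
    have : Filter.Tendsto (fun t : ℝ => (g (t, 0)).2) (nhds d) (nhds x) := by
      rw [← hφdval]; exact hφc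
    exact this.eventually (eventually_gt_nhds hx)
  have hev3 : ∀ᶠ t in nhds d, 0 < t := eventually_gt_nhds hd
  -- strict monotonicity of F in second variable
  have hmono : ∀ t : ℝ, 0 < t → ∀ u v : ℝ, 0 < u → u < v → F (t, u) < F (t, v) := by
    intro t ht u v hu huv
    have h1u : (0:ℝ) < 1 + u := by linarith
    have hle : Real.log (1 + u) ≤ Real.log (1 + v) :=
      Real.log_le_log (by linarith) (by linarith)
    have hexple : Real.exp (-(Real.log (1 + v) * t)) ≤ Real.exp (-(Real.log (1 + u) * t)) := by
      apply Real.exp_le_exp.mpr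
      nlinarith
    have : lam * Real.exp (-(Real.log (1 + v) * t)) ≤ lam * Real.exp (-(Real.log (1 + u) * t)) :=
      mul_le_mul_of_nonneg_left hexple (le_of_lt hlam)
    simp only [hF]
    nlinarith
  -- eventually xt = φ
  have hevEq : xt =ᶠ[nhds d] fun t => (g (t, 0)).2 := by
    filter_upwards [hev1, hev2, hev3] with t h1 h2 h3
    have hfst : (g (t, 0)).1 = t := congrArg Prod.fst h1
    have hzero : F (g (t, 0)) = 0 := congrArg Prod.snd h1
    have hgt : g (t, 0) = (t, (g (t, 0)).2) := Prod.ext hfst rfl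
    rw [hgt] at hzero
    have hzxt : F (t, xt t) = 0 := hFxt t h3
    have hxtpos := (hxt t h3).1
    rcases lt_trichotomy (xt t) ((g (t, 0)).2) with h | h | h
    · exact absurd (hmono t h3 _ _ hxtpos h) (by rw [hzero, hzxt]; exact lt_irrefl 0)
    · exact h
    · exact absurd (hmono t h3 _ _ h2 h) (by rw [hzero, hzxt]; exact lt_irrefl 0)
  have := hφd.congr_of_eventuallyEq hevEq
  convert this using 1

theorem nu_deriv_pos (lam : ℝ) (hlam : 0 < lam) (xt : ℝ → ℝ)
    (hxt : ∀ d > (0 : ℝ), 0 < xt d ∧ d * xt d = 1 + lam / (1 + xt d) ^ d)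
    (ν : ℝ → ℝ) (hν : ν = fun d => (d * xt d - 1) / (1 + xt d)) :
    (∀ d > (0 : ℝ),
      HasDerivAt ν ((ν d / (d * xt d)) * (xt d - Real.log (1 + xt d))) d ∧
      0 < (ν d / (d * xt d)) * (xt d - Real.log (1 + xt d))) ∧
    StrictMonoOn ν (Set.Ioi 0) := by
  have main : ∀ d > (0 : ℝ),
      HasDerivAt ν ((ν d / (d * xt d)) * (xt d - Real.log (1 + xt d))) d ∧
      0 < (ν d / (d * xt d)) * (xt d - Real.log (1 + xt d)) := by
    intro d hd
    obtain ⟨hx, heq⟩ := hxt d hd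
    have h1x : (0:ℝ) < 1 + xt d := by linarith
    have hpow : (0:ℝ) < (1 + xt d) ^ d := Real.rpow_pos_of_pos h1x d
    have hEpos : (0:ℝ) < d * xt d - 1 := by
      have : 0 < lam / (1 + xt d) ^ d := by positivity
      linarith
    have hx' := xt_hasDerivAt lam hlam xt hxt d hd
    set x' : ℝ := -((xt d + Real.log (1 + xt d) * (d * xt d - 1)) /
        (d * xt d * (1 + d) / (1 + xt d))) with hx'def
    have hnum : HasDerivAt (fun t => t * xt t - 1) (1 * xt d + d * x') d :=
      ((hasDerivAt_id d).mul hx').sub_const 1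
    have hden : HasDerivAt (fun t => 1 + xt t) (0 + x') d :=
      (hasDerivAt_const d (1:ℝ)).add hx'
    have hdiv := hnum.div hden (ne_of_gt h1x)
    have hL : Real.log (1 + xt d) < xt d := by
      have := Real.log_lt_sub_one_of_pos h1x (by linarith : (1:ℝ) + xt d ≠ 1)
      linarith
    constructor
    · rw [hν]
      refine hdiv.congr_deriv ?_
      symm
      simp only [hx'def]
      have hd' : d ≠ 0 := ne_of_gt hd
      have hx0 : xt d ≠ 0 := ne_of_gt hx
      have h1d : (1:ℝ) + d ≠ 0 := by positivity
      have h1x' : (1:ℝ) + xt d ≠ 0 := ne_of_gt h1x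
      field_simp
      ring
    · have hν' : ν d = (d * xt d - 1) / (1 + xt d) := by rw [hν]
      have h1 : 0 < ν d := by rw [hν']; positivity
      have h2 : 0 < d * xt d := by positivity
      have h3 : 0 < xt d - Real.log (1 + xt d) := by linarith
      positivity
  refine ⟨main, ?_⟩
  have hcont : ContinuousOn ν (Set.Ioi 0) := fun t ht =>
    ((main t ht).1.continuousAt).continuousWithinAt
  refine strictMonoOn_of_deriv_pos (convex_Ioi 0) hcont ?_
  intro t ht
  rw [interior_Ioi] at ht
  rw [(main t ht).1.deriv]
  exact (main t ht).2
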